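/- For integer K ≥ 2 and λ, μ > 0, with s(ρ) = (λ/μ)ρ + Σ_{k=1}^K k ν_ρ(k), one has s'(1) = λ/μ + K²/12 + K/6, and the second derivative of ψ = φ ∘ s^{-1} at s₀ = s(1) equals ψ''(s₀) = K(K-1)/(3(K+1)(λ/μ + K²/12 + K/6)²), which is asymptotically equivalent to 48/K³ as K → ∞. -/

import Mathlib

open Filter Finset

noncomputable def nu (K : ℕ) (ρ : ℝ) (k : ℕ) : ℝ :=
  if ρ = 1 then 1 / (K + 1) else ρ ^ k * (1 - ρ) / (1 - ρ ^ (K + 1))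

/-- Proportion of problematic stations at fixed-point load ρ. -/
noncomputable def phi (K : ℕ) (ρ : ℝ) : ℝ := nu K ρ 0 + nu K ρ K

/-- Fleet size as a function of the fixed-point load ρ. -/
noncomputable def S (K : ℕ) (lam mu : ℝ) (ρ : ℝ) : ℝ :=
  lam / mu * ρ + ∑ k ∈ Finset.Icc 1 K, (k : ℝ) * nu K ρ k

lemma sum_id' (K : ℕ) : ∑ j ∈ Finset.range (K+1), (j:ℝ) = K*(K+1)/2 := by
  induction K with
  | zero => simp
  | succ n ih => rw [Finset.sum_range_succ, ih]; push_cast; ring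

lemma sum_jj1 (K : ℕ) :
    ∑ j ∈ Finset.range (K+1), (j:ℝ) * ((j-1 : ℕ):ℝ) = ((K:ℝ)-1)*K*(K+1)/3 := by
  induction K with
  | zero => norm_num
  | succ n ih =>
    rw [Finset.sum_range_succ, ih]
    simp only [Nat.add_sub_cancel]
    push_cast; ring

lemma sum_Icc_id (K : ℕ) : ∑ k ∈ Finset.Icc 1 K, (k:ℝ) = K*(K+1)/2 := by
  induction K with
  | zero => simp
  | succ n ih => rw [Finset.sum_Icc_succ_top (by omega), ih]; push_cast; ring

lemma sum_Icc_sq (K : ℕ) : ∑ k ∈ Finset.Icc 1 K, (k:ℝ)*(k:ℝ) = K*(K+1)*(2*K+1)/6 := by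
  induction K with
  | zero => simp
  | succ n ih => rw [Finset.sum_Icc_succ_top (by omega), ih]; push_cast; ring

noncomputable def gfun (K : ℕ) : ℝ → ℝ := fun ρ => ∑ j ∈ Finset.range (K+1), ρ^j
noncomputable def gdfun (K : ℕ) : ℝ → ℝ := fun ρ => ∑ j ∈ Finset.range (K+1), (j:ℝ) * ρ^(j-1)
noncomputable def Nfun (K : ℕ) : ℝ → ℝ := fun ρ => ∑ k ∈ Finset.Icc 1 K, (k:ℝ) * ρ^k
noncomputable def Ndfun (K : ℕ) : ℝ → ℝ := fun ρ => ∑ k ∈ Finset.Icc 1 K, (k:ℝ) * ((k:ℝ) * ρ^(k-1))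

lemma gfun_pos {K : ℕ} {ρ : ℝ} (hρ : 0 < ρ) : 0 < gfun K ρ :=
  Finset.sum_pos (fun j _ => pow_pos hρ j) (by simp)

lemma nu_eq {K : ℕ} {ρ : ℝ} (hρ : 0 < ρ) (k : ℕ) : nu K ρ k = ρ^k / gfun K ρ := by
  unfold nu gfun
  split_ifs with h
  · subst h; simp [Finset.sum_const, Finset.card_range]
  · have hne : ρ - 1 ≠ 0 := sub_ne_zero.2 h
    have hpow : ρ ^ (K+1) ≠ 1 := by
      rcases lt_or_gt_of_ne h with h1 | h1
      · exact ne_of_lt (pow_lt_one₀ hρ.le h1 (by omega))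
      · exact ne_of_gt (one_lt_pow₀ h1 (by omega))
    have h2 : 1 - ρ ^ (K+1) ≠ 0 := sub_ne_zero.2 (Ne.symm hpow)
    have h3 : ρ ^ (K+1) - 1 ≠ 0 := sub_ne_zero.2 hpow
    rw [geom_sum_eq h, div_div_eq_mul_div, div_eq_div_iff h2 h3]
    ring

lemma phi_eq {K : ℕ} {ρ : ℝ} (hρ : 0 < ρ) : phi K ρ = (1 + ρ^K) / gfun K ρ := by
  rw [phi, nu_eq hρ, nu_eq hρ, pow_zero, add_div]

lemma S_eq {K : ℕ} {lam mu ρ : ℝ} (hρ : 0 < ρ) :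
    S K lam mu ρ = lam / mu * ρ + Nfun K ρ / gfun K ρ := by
  rw [S, Nfun, Finset.sum_div]
  congr 1
  exact Finset.sum_congr rfl fun k _ => by rw [nu_eq hρ, mul_div_assoc]

lemma hg_deriv (K : ℕ) (ρ : ℝ) : HasStrictDerivAt (gfun K) (gdfun K ρ) ρ :=
  HasStrictDerivAt.fun_sum fun j _ => hasStrictDerivAt_pow j ρ

lemma hN_deriv (K : ℕ) (ρ : ℝ) : HasStrictDerivAt (Nfun K) (Ndfun K ρ) ρ :=
  HasStrictDerivAt.fun_sum fun k _ => (hasStrictDerivAt_pow k ρ).const_mul _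

noncomputable def DS (K : ℕ) (lam mu : ℝ) : ℝ → ℝ := fun ρ =>
  lam / mu + (Ndfun K ρ * gfun K ρ - Nfun K ρ * gdfun K ρ) / (gfun K ρ)^2

noncomputable def Dphi (K : ℕ) : ℝ → ℝ := fun ρ =>
  ((K:ℝ) * ρ^(K-1) * gfun K ρ - (1 + ρ^K) * gdfun K ρ) / (gfun K ρ)^2

lemma ev_pos {ρ : ℝ} (hρ : 0 < ρ) : ∀ᶠ x in nhds ρ, 0 < x := eventually_gt_nhds hρ

lemma hS_deriv (K : ℕ) (lam mu : ℝ) {ρ : ℝ} (hρ : 0 < ρ) :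
    HasStrictDerivAt (S K lam mu) (DS K lam mu ρ) ρ := by
  have hnice : HasStrictDerivAt (fun x => lam / mu * x + Nfun K x / gfun K x)
      (DS K lam mu ρ) ρ := by
    have h1 : HasStrictDerivAt (fun x : ℝ => lam / mu * x) (lam / mu) ρ := by
      simpa using (hasStrictDerivAt_id ρ).const_mul (lam/mu)
    exact h1.add ((hN_deriv K ρ).fun_div (hg_deriv K ρ) (gfun_pos hρ).ne')
  exact hnice.congr_of_eventuallyEq <| (ev_pos hρ).mono fun x hx => (S_eq hx).symm

lemma hphi_deriv (K : ℕ) {ρ : ℝ} (hρ : 0 < ρ) :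
    HasStrictDerivAt (phi K) (Dphi K ρ) ρ := by
  have hu : HasStrictDerivAt (fun x : ℝ => 1 + x^K) ((K:ℝ) * ρ^(K-1)) ρ :=
    (hasStrictDerivAt_pow K ρ).const_add 1
  have hnice := hu.fun_div (hg_deriv K ρ) (gfun_pos hρ).ne'
  exact hnice.congr_of_eventuallyEq <| (ev_pos hρ).mono fun x hx => (phi_eq hx).symm

lemma gfun_one (K : ℕ) : gfun K 1 = (K:ℝ)+1 := by
  simp [gfun, Finset.sum_const, Finset.card_range]

lemma gdfun_one (K : ℕ) : gdfun K 1 = K*((K:ℝ)+1)/2 := by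
  simp only [gdfun, one_pow, mul_one]; exact sum_id' K

lemma Nfun_one (K : ℕ) : Nfun K 1 = K*((K:ℝ)+1)/2 := by
  simp only [Nfun, one_pow, mul_one]; exact sum_Icc_id K

lemma Ndfun_one (K : ℕ) : Ndfun K 1 = K*((K:ℝ)+1)*(2*K+1)/6 := by
  simp only [Ndfun, one_pow, mul_one]; exact sum_Icc_sq K

lemma DS_one (K : ℕ) (lam mu : ℝ) : DS K lam mu 1 = lam/mu + (K:ℝ)^2/12 + (K:ℝ)/6 := by
  have h : ((K:ℝ)+1) ≠ 0 := by positivity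
  rw [DS, gfun_one, gdfun_one, Nfun_one, Ndfun_one]
  field_simp
  ring

lemma Dphi_one (K : ℕ) : Dphi K 1 = 0 := by
  rw [Dphi, gfun_one, gdfun_one, div_eq_zero_iff]
  left
  simp only [one_pow, mul_one]
  ring

lemma hgd_deriv_one (K : ℕ) :
    HasStrictDerivAt (gdfun K) (((K:ℝ)-1)*K*((K:ℝ)+1)/3) 1 := by
  have h : HasStrictDerivAt (gdfun K)
      (∑ j ∈ Finset.range (K+1), (j:ℝ) * (((j-1:ℕ):ℝ) * (1:ℝ)^(j-1-1))) 1 :=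
    HasStrictDerivAt.fun_sum fun j _ => (hasStrictDerivAt_pow (j-1) 1).const_mul _
  convert h using 1
  simp only [one_pow, mul_one]
  exact (sum_jj1 K).symm

lemma hDphi_deriv_one (K : ℕ) (hK : 1 ≤ K) :
    HasStrictDerivAt (Dphi K) ((K:ℝ)*((K:ℝ)-1)/(3*((K:ℝ)+1))) 1 := by
  have hgne : gfun K 1 ≠ 0 := by rw [gfun_one]; positivity
  have hA : HasStrictDerivAt (fun ρ : ℝ => (K:ℝ) * ρ^(K-1) * gfun K ρ - (1 + ρ^K) * gdfun K ρ)
      (((K:ℝ) * (((K-1:ℕ):ℝ) * (1:ℝ)^(K-1-1))) * gfun K 1 + (K:ℝ) * (1:ℝ)^(K-1) * gdfun K 1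
        - (((K:ℝ) * (1:ℝ)^(K-1)) * gdfun K 1 + (1 + (1:ℝ)^K) * (((K:ℝ)-1)*K*((K:ℝ)+1)/3))) 1 :=
    (((hasStrictDerivAt_pow (K-1) 1).const_mul ((K:ℝ))).fun_mul (hg_deriv K 1)).sub
      (((hasStrictDerivAt_pow K 1).const_add 1).fun_mul (hgd_deriv_one K))
  have hB : HasStrictDerivAt (fun ρ : ℝ => (gfun K ρ)^2)
      (gdfun K 1 * gfun K 1 + gfun K 1 * gdfun K 1) 1 := by
    simpa only [pow_two] using (hg_deriv K 1).fun_mul (hg_deriv K 1)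
  have h := hA.fun_div hB (pow_ne_zero 2 hgne)
  refine h.congr_deriv (Eq.symm ?_)
  rw [gfun_one, gdfun_one, Nat.cast_sub hK]
  have h1 : ((K:ℝ)+1) ≠ 0 := by positivity
  simp only [one_pow, mul_one, Nat.cast_one]
  field_simp
  ring

lemma hDS_deriv_one (K : ℕ) (lam mu : ℝ) : ∃ d, HasStrictDerivAt (DS K lam mu) d 1 := by
  have hgne : gfun K 1 ≠ 0 := by rw [gfun_one]; positivity
  have hNd : HasStrictDerivAt (Ndfun K)
      (∑ k ∈ Finset.Icc 1 K, (k:ℝ) * ((k:ℝ) * (((k-1:ℕ):ℝ) * (1:ℝ)^(k-1-1)))) 1 :=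
    HasStrictDerivAt.fun_sum fun k _ => ((hasStrictDerivAt_pow (k-1) 1).const_mul _).const_mul _
  have hA := (hNd.fun_mul (hg_deriv K 1)).sub ((hN_deriv K 1).fun_mul (hgd_deriv_one K))
  have hB : HasStrictDerivAt (fun ρ : ℝ => (gfun K ρ)^2)
      (gdfun K 1 * gfun K 1 + gfun K 1 * gdfun K 1) 1 := by
    simpa only [pow_two] using (hg_deriv K 1).fun_mul (hg_deriv K 1)
  exact ⟨_, (hA.fun_div hB (pow_ne_zero 2 hgne)).const_add (lam/mu)⟩
/-- s'(1) = λ/μ + K²/12 + K/6; the second derivative of ψ = φ ∘ s⁻¹ at s₀ = s(1) is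
K(K-1)/(3(K+1)(λ/μ+K²/12+K/6)²), asymptotically 48/K³ as K → ∞. -/
theorem flatness_at_optimum (lam mu : ℝ) (hlam : 0 < lam) (hmu : 0 < mu) :
    (∀ K : ℕ, 2 ≤ K →
      deriv (S K lam mu) 1 = lam / mu + K ^ 2 / 12 + K / 6 ∧
      ∀ ψ : ℝ → ℝ, (∀ ρ : ℝ, 0 < ρ → ψ (S K lam mu ρ) = phi K ρ) →
        iteratedDeriv 2 ψ (S K lam mu 1)
          = K * (K - 1) / (3 * (K + 1) * (lam / mu + K ^ 2 / 12 + K / 6) ^ 2)) ∧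
    Tendsto
      (fun K : ℕ =>
        (K * (K - 1) / (3 * (K + 1) * (lam / mu + K ^ 2 / 12 + K / 6) ^ 2)) /
          (48 / (K : ℝ) ^ 3))
      atTop (nhds 1) := by
  have hlm : 0 < lam / mu := div_pos hlam hmu
  constructor
  · intro K hK
    have hcpos : 0 < lam / mu + (K:ℝ)^2/12 + (K:ℝ)/6 := by positivity
    set c : ℝ := lam / mu + (K:ℝ)^2/12 + (K:ℝ)/6 with hc_def
    have hc : c ≠ 0 := hcpos.ne'
    have hDS1 : DS K lam mu 1 = c := DS_one K lam mu
    have hS1 : HasStrictDerivAt (S K lam mu) c 1 := hDS1 ▸ hS_deriv K lam mu one_pos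
    constructor
    · exact hS1.hasDerivAt.deriv
    · intro ψ hψ
      set s₀ : ℝ := S K lam mu 1 with hs₀
      have hfeq := hS1.hasStrictFDerivAt_equiv hc
      set F := hfeq.toOpenPartialHomeomorph (S K lam mu) with hF
      have hFcoe : ⇑F = S K lam mu := hfeq.toOpenPartialHomeomorph_coe
      have hsource : (1:ℝ) ∈ F.source := hfeq.mem_toOpenPartialHomeomorph_source
      have htarget : s₀ ∈ F.target := hfeq.image_mem_toOpenPartialHomeomorph_target
      have hsymm1 : F.symm s₀ = 1 := by
        have := F.left_inv hsource
        rwa [hFcoe] at this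
      have hcontsymm : Tendsto F.symm (nhds s₀) (nhds 1) := by
        have h := (F.symm.continuousAt (F.symm_source ▸ htarget)).tendsto
        rwa [hsymm1] at h
      have hEt : ∀ᶠ y in nhds s₀, y ∈ F.target := F.open_target.eventually_mem htarget
      have hpos' : ∀ᶠ y in nhds s₀, 0 < F.symm y := hcontsymm.eventually (ev_pos one_pos)
      obtain ⟨d, hd⟩ := hDS_deriv_one K lam mu
      have hDSpos : ∀ᶠ y in nhds s₀, 0 < DS K lam mu (F.symm y) := by
        have h2 : Tendsto (fun y => DS K lam mu (F.symm y)) (nhds s₀) (nhds (DS K lam mu 1)) :=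
          (hd.hasDerivAt.continuousAt.tendsto).comp hcontsymm
        exact h2.eventually (ev_pos (by rw [hDS1]; exact hcpos))
      have hright : ∀ᶠ y in nhds s₀, S K lam mu (F.symm y) = y :=
        hEt.mono fun y hy => by rw [← hFcoe]; exact F.right_inv hy
      have hψev : ψ =ᶠ[nhds s₀] fun y => phi K (F.symm y) :=
        (hpos'.and hright).mono fun y ⟨h1, h2⟩ => by
          show ψ y = phi K (F.symm y)
          conv_lhs => rw [← h2]
          exact hψ _ h1
      have hform : ∀ᶠ y in nhds s₀,
          deriv (fun z => phi K (F.symm z)) y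
            = Dphi K (F.symm y) * (DS K lam mu (F.symm y))⁻¹ := by
        filter_upwards [hEt, hpos', hDSpos] with y hyt hy0 hyDS
        have hSat : HasDerivAt (⇑F) (DS K lam mu (F.symm y)) (F.symm y) := by
          rw [hFcoe]; exact (hS_deriv K lam mu hy0).hasDerivAt
        have hsymmDeriv : HasDerivAt F.symm (DS K lam mu (F.symm y))⁻¹ y :=
          F.hasDerivAt_symm hyt hyDS.ne' hSat
        have hphiAt : HasDerivAt (phi K) (Dphi K (F.symm y)) (F.symm y) :=
          (hphi_deriv K hy0).hasDerivAt
        simpa [Function.comp_def] using (hphiAt.comp y hsymmDeriv).deriv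
      have hdψ : deriv ψ =ᶠ[nhds s₀]
          fun y => Dphi K (F.symm y) * (DS K lam mu (F.symm y))⁻¹ :=
        hψev.deriv.trans hform
      have hinner : HasDerivAt (fun ρ => Dphi K ρ * (DS K lam mu ρ)⁻¹)
          ((K:ℝ)*((K:ℝ)-1)/(3*((K:ℝ)+1)) * c⁻¹) 1 := by
        have h1 := (hDphi_deriv_one K (by omega)).hasDerivAt.fun_mul
          ((hd.hasDerivAt).fun_inv (by rw [hDS1]; exact hc))
        refine h1.congr_deriv (Eq.symm ?_)
        rw [Dphi_one, hDS1]
        ring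
      have hsymmS0 : HasDerivAt F.symm c⁻¹ s₀ := by
        refine F.hasDerivAt_symm htarget hc ?_
        rw [hsymm1, hFcoe]
        exact hS1.hasDerivAt
      have hfinal : HasDerivAt (fun y => Dphi K (F.symm y) * (DS K lam mu (F.symm y))⁻¹)
          ((K:ℝ)*((K:ℝ)-1)/(3*((K:ℝ)+1)) * c⁻¹ * c⁻¹) s₀ := by
        have hinner' : HasDerivAt (fun ρ => Dphi K ρ * (DS K lam mu ρ)⁻¹)
            ((K:ℝ)*((K:ℝ)-1)/(3*((K:ℝ)+1)) * c⁻¹) (F.symm s₀) := by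
          rw [hsymm1]; exact hinner
        simpa [Function.comp_def] using hinner'.comp s₀ hsymmS0
      have : iteratedDeriv 2 ψ s₀ = deriv (deriv ψ) s₀ := by
        rw [show (2:ℕ) = 1 + 1 from rfl, iteratedDeriv_succ, iteratedDeriv_one]
      rw [this, hdψ.deriv_eq, hfinal.deriv]
      have h2 : ((K:ℝ)+1) ≠ 0 := by positivity
      rw [mul_assoc, ← mul_inv, ← sq, ← div_eq_mul_inv, div_div]
  · have key : (fun K : ℕ =>
        ((K:ℝ) * (K - 1) / (3 * (K + 1) * (lam / mu + K ^ 2 / 12 + K / 6) ^ 2)) /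
          (48 / (K : ℝ) ^ 3))
        =ᶠ[atTop] (fun K : ℕ => (1 - ((K:ℝ))⁻¹) /
            ((1 + ((K:ℝ))⁻¹) * (1 + 2*((K:ℝ))⁻¹ + 12*(lam/mu)*(((K:ℝ))⁻¹)^2)^2)) := by
      filter_upwards [eventually_ge_atTop 1] with K hK
      have hK0 : (0:ℝ) < K := by exact_mod_cast hK
      have h1 : (K:ℝ) ≠ 0 := hK0.ne'
      have h2 : ((K:ℝ)+1) ≠ 0 := by positivity
      have h3 : lam / mu + (K:ℝ) ^ 2 / 12 + (K:ℝ) / 6 ≠ 0 := by positivity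
      have h4 : 1 + ((K:ℝ))⁻¹ ≠ 0 := by positivity
      have h5 : 1 + 2*((K:ℝ))⁻¹ + 12*(lam/mu)*(((K:ℝ))⁻¹)^2 ≠ 0 := by positivity
      field_simp
      ring
    have hcont : Tendsto (fun x : ℝ => (1 - x) / ((1 + x) * (1 + 2*x + 12*(lam/mu)*x^2)^2))
        (nhds 0) (nhds 1) := by
      have h : ContinuousAt (fun x : ℝ => (1 - x) / ((1 + x) * (1 + 2*x + 12*(lam/mu)*x^2)^2))
          0 := by
        apply ContinuousAt.div
        · fun_prop
        · fun_prop
        · norm_num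
      have h0 : ((1:ℝ) - 0) / ((1 + 0) * (1 + 2*0 + 12*(lam/mu)*0^2)^2) = 1 := by norm_num
      simpa [h0] using h.tendsto
    have := hcont.comp tendsto_inv_atTop_nhds_zero_nat
    exact Tendsto.congr' key.symm this
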